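/- Let N₁, N₂, R₁, R₂ be mutually independent random variables on a probability space (Ω, ℱ, ℙ), where N₁ and N₂ take values in {1, …, N_max} with common pmf p_N and R₁, R₂ take values in a finite set {r_1, …, r_m} of positive reals with common pmf p_R. Suppose the inter-generation time Δt is exponentially distributed with rate λ > 0, independent of (N₁, N₂, R₁, R₂), and let Δt' = Δt + (nΘ/K)(N₂/R₂ − N₁/R₁) with n, K positive integers, Θ > 0. Writing s_{i,k,j,l} = (nΘ/K)(k/r_i − l/r_j), for every real x satisfying x ≥ s_{i,k,j,l} for all indices i, k, j, l: ℙ(Δt' ≤ x) = 1 − e^{−λx} · Σ_{i=1}^{m} Σ_{k=1}^{N_max} Σ_{j=1}^{m} Σ_{l=1}^{N_max} p_N(k) p_R(r_i) p_N(l) p_R(r_j) · e^{λ s_{i,k,j,l}}. -/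

import Mathlib

open MeasureTheory ProbabilityTheory

lemma partition_sum {Ω : Type*} [MeasurableSpace Ω] (μ : Measure Ω) [IsProbabilityMeasure μ]
    {ι : Type*} (S : Finset ι) (f : Ω → ℝ) (hf : Measurable f) (v : ι → ℝ)
    (hv : Set.InjOn v S) (hcov : ∀ ω, ∃ i ∈ S, f ω = v i) :
    ∑ i ∈ S, (μ {ω | f ω = v i}).toReal = 1 := by
  have hmeas : ∀ i, MeasurableSet {ω | f ω = v i} := fun i =>
    hf (measurableSet_singleton (v i))
  have hdisj : (S : Set ι).PairwiseDisjoint (fun i => {ω | f ω = v i}) := by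
    intro a ha b hb hab
    exact Set.disjoint_left.mpr fun ω h1 h2 => hab (hv ha hb (h1.symm.trans h2))
  have hU : μ (⋃ i ∈ S, {ω | f ω = v i}) = ∑ i ∈ S, μ {ω | f ω = v i} :=
    measure_biUnion_finset hdisj (fun i _ => hmeas i)
  have hunion : (⋃ i ∈ S, {ω | f ω = v i}) = Set.univ := by
    ext ω
    simp only [Set.mem_iUnion, Set.mem_univ, iff_true, Set.mem_setOf_eq]
    simpa using hcov ω
  rw [hunion, measure_univ] at hU
  rw [← ENNReal.toReal_sum (fun i _ => measure_ne_top μ _), ← hU, ENNReal.toReal_one]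

/-- Exponential inter-generation times (Eq. (51), shifted-exponential form): if `Δt` is
exponential with rate `λ` and `Δt' = Δt + (nΘ/K)(N₂/R₂ − N₁/R₁)`, then with
`s = (nΘ/K)(k/r_i − l/r_j)`, for every `x` with `x ≥ s` for all indices,
`ℙ(Δt' ≤ x) = 1 − e^{−λx} Σ_i Σ_k Σ_j Σ_l p_N(k) p_R(r_i) p_N(l) p_R(r_j) e^{λ s}`. -/
theorem stmt13 {Ω : Type*} [MeasurableSpace Ω] (μ : Measure Ω) [IsProbabilityMeasure μ]
    (Nmax m : ℕ) (Δt : Ω → ℝ) (N₁ N₂ : Ω → ℕ) (R₁ R₂ : Ω → ℝ)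
    (hΔt : Measurable Δt)
    (hN₁ : Measurable N₁) (hN₂ : Measurable N₂)
    (hR₁ : Measurable R₁) (hR₂ : Measurable R₂)
    (hindep : iIndepFun
      ![Δt, fun ω => ((N₁ ω : ℝ)), fun ω => ((N₂ ω : ℝ)), R₁, R₂] μ)
    (hN₁val : ∀ ω, N₁ ω ∈ Finset.Icc 1 Nmax) (hN₂val : ∀ ω, N₂ ω ∈ Finset.Icc 1 Nmax)
    (r : Fin m → ℝ) (hr : StrictMono r) (hrpos : ∀ i, 0 < r i)
    (hR₁val : ∀ ω, ∃ i, R₁ ω = r i) (hR₂val : ∀ ω, ∃ i, R₂ ω = r i)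
    (pN : ℕ → ℝ)
    (hpN₁ : ∀ k, pN k = (μ {ω | N₁ ω = k}).toReal)
    (hpN₂ : ∀ k, pN k = (μ {ω | N₂ ω = k}).toReal)
    (pR : Fin m → ℝ)
    (hpR₁ : ∀ i, pR i = (μ {ω | R₁ ω = r i}).toReal)
    (hpR₂ : ∀ i, pR i = (μ {ω | R₂ ω = r i}).toReal)
    (lam : ℝ) (hlam : 0 < lam)
    (hΔtexp : ∀ y, (μ {ω | Δt ω ≤ y}).toReal =
      if 0 ≤ y then 1 - Real.exp (-lam * y) else 0)
    (n K : ℕ) (hn : 0 < n) (hK : 0 < K) (Θ : ℝ) (hΘ : 0 < Θ)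
    (x : ℝ)
    (hx : ∀ (i j : Fin m), ∀ k ∈ Finset.Icc 1 Nmax, ∀ l ∈ Finset.Icc 1 Nmax,
      (n * Θ / K) * ((k : ℝ) / r i - (l : ℝ) / r j) ≤ x) :
    (μ {ω | Δt ω + (n * Θ / K) * ((N₂ ω : ℝ) / R₂ ω - (N₁ ω : ℝ) / R₁ ω) ≤ x}).toReal =
      1 - Real.exp (-lam * x) *
        ∑ i : Fin m, ∑ k ∈ Finset.Icc 1 Nmax, ∑ j : Fin m, ∑ l ∈ Finset.Icc 1 Nmax,
          pN k * pR i * pN l * pR j *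
            Real.exp (lam * ((n * Θ / K) * ((k : ℝ) / r i - (l : ℝ) / r j))) := by
  classical
  set c : ℝ := (n : ℝ) * Θ / K with hc
  set S : Finset ℕ := Finset.Icc 1 Nmax with hS
  set E : Set Ω := {ω | Δt ω + c * ((N₂ ω : ℝ) / R₂ ω - (N₁ ω : ℝ) / R₁ ω) ≤ x} with hE
  set T : Finset (Fin m × ℕ × Fin m × ℕ) := Finset.univ ×ˢ S ×ˢ Finset.univ ×ˢ S with hT
  set sh : Fin m × ℕ × Fin m × ℕ → ℝ :=
    fun t => c * ((t.2.1 : ℝ) / r t.1 - (t.2.2.2 : ℝ) / r t.2.2.1) with hsh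
  set B : Fin m × ℕ × Fin m × ℕ → Set Ω := fun t =>
    {ω | (N₂ ω : ℝ) = (t.2.1 : ℝ) ∧ R₂ ω = r t.1 ∧ (N₁ ω : ℝ) = (t.2.2.2 : ℝ) ∧
      R₁ ω = r t.2.2.1} with hB
  have hN₁m : Measurable fun ω => (N₁ ω : ℝ) := measurable_from_nat.comp hN₁
  have hN₂m : Measurable fun ω => (N₂ ω : ℝ) := measurable_from_nat.comp hN₂
  have hEmeas : MeasurableSet E :=
    (hΔt.add (measurable_const.mul ((hN₂m.div hR₂).sub (hN₁m.div hR₁)))) measurableSet_Iic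
  have hBmeas : ∀ t, MeasurableSet (B t) := fun t =>
    (hN₂m (measurableSet_singleton _)).inter
      ((hR₂ (measurableSet_singleton _)).inter
        ((hN₁m (measurableSet_singleton _)).inter (hR₁ (measurableSet_singleton _))))
  have hdisj : (↑T : Set (Fin m × ℕ × Fin m × ℕ)).PairwiseDisjoint fun t => E ∩ B t := by
    intro a _ b _ hab
    refine Set.disjoint_left.mpr fun ω h1 h2 => hab ?_
    obtain ⟨i, k, j, l⟩ := a
    obtain ⟨i', k', j', l'⟩ := b
    obtain ⟨-, hk, hi, hl, hj⟩ := h1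
    obtain ⟨-, hk', hi', hl', hj'⟩ := h2
    have ek : k = k' := Nat.cast_injective (hk.symm.trans hk')
    have ei : i = i' := hr.injective (hi.symm.trans hi')
    have el : l = l' := Nat.cast_injective (hl.symm.trans hl')
    have ej : j = j' := hr.injective (hj.symm.trans hj')
    simp [ek, ei, el, ej]
  have hEU : E = ⋃ t ∈ T, E ∩ B t := by
    ext ω
    simp only [Set.mem_iUnion, Set.mem_inter_iff, exists_prop]
    constructor
    · intro hω
      obtain ⟨i, hi⟩ := hR₂val ω
      obtain ⟨j, hj⟩ := hR₁val ω
      refine ⟨⟨i, N₂ ω, j, N₁ ω⟩, ?_, hω, rfl, hi, rfl, hj⟩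
      simp [hT, hN₂val ω, hN₁val ω]
    · rintro ⟨t, -, hω, -⟩
      exact hω
  have hsum : μ E = ∑ t ∈ T, μ (E ∩ B t) := by
    conv_lhs => rw [hEU]
    exact measure_biUnion_finset hdisj fun t _ => hEmeas.inter (hBmeas t)
  -- per-term computation
  have key : ∀ t ∈ T, (μ (E ∩ B t)).toReal =
      pN t.2.1 * pR t.1 * pN t.2.2.2 * pR t.2.2.1 -
        Real.exp (-lam * x) *
          (pN t.2.1 * pR t.1 * pN t.2.2.2 * pR t.2.2.1 * Real.exp (lam * sh t)) := by
    rintro ⟨i, k, j, l⟩ ht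
    simp only [hT, Finset.mem_product, Finset.mem_univ, true_and] at ht
    obtain ⟨hk, hl⟩ := ht
    have hsht : sh ⟨i, k, j, l⟩ = c * ((k : ℝ) / r i - (l : ℝ) / r j) := rfl
    show (μ (E ∩ B ⟨i, k, j, l⟩)).toReal =
      pN k * pR i * pN l * pR j -
        Real.exp (-lam * x) * (pN k * pR i * pN l * pR j * Real.exp (lam * sh ⟨i, k, j, l⟩))
    set g : Fin 5 → Set Ω :=
      ![Δt ⁻¹' Set.Iic (x - sh ⟨i, k, j, l⟩), (fun ω => (N₁ ω : ℝ)) ⁻¹' {(l : ℝ)},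
        (fun ω => (N₂ ω : ℝ)) ⁻¹' {(k : ℝ)}, R₁ ⁻¹' {r j}, R₂ ⁻¹' {r i}] with hg
    have hEB : E ∩ B ⟨i, k, j, l⟩ = ⋂ a, g a := by
      ext ω
      simp only [Set.mem_iInter, Set.mem_inter_iff]
      constructor
      · rintro ⟨hωE, hk2, hi2, hl2, hj2⟩
        have hk2' : (N₂ ω : ℝ) = (k : ℝ) := hk2
        have hi2' : R₂ ω = r i := hi2
        have hl2' : (N₁ ω : ℝ) = (l : ℝ) := hl2
        have hj2' : R₁ ω = r j := hj2
        have h' : Δt ω + c * ((N₂ ω : ℝ) / R₂ ω - (N₁ ω : ℝ) / R₁ ω) ≤ x := hωE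
        rw [hk2', hi2', hl2', hj2'] at h'
        have hle : Δt ω ≤ x - sh ⟨i, k, j, l⟩ := by
          rw [hsht]; linarith
        intro a
        fin_cases a
        · exact hle
        · exact hl2'
        · exact hk2'
        · exact hj2'
        · exact hi2'
      · intro h
        have h0 : Δt ω ∈ Set.Iic (x - sh ⟨i, k, j, l⟩) := h 0
        have h1 : (N₁ ω : ℝ) = (l : ℝ) := h 1
        have h2 : (N₂ ω : ℝ) = (k : ℝ) := h 2
        have h3 : R₁ ω = r j := h 3
        have h4 : R₂ ω = r i := h 4
        refine ⟨?_, h2, h4, h1, h3⟩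
        show Δt ω + c * ((N₂ ω : ℝ) / R₂ ω - (N₁ ω : ℝ) / R₁ ω) ≤ x
        rw [h1, h2, h3, h4]
        rw [Set.mem_Iic, hsht] at h0
        linarith
    have hgmeas : ∀ a : Fin 5, MeasurableSet[MeasurableSpace.comap
        (![Δt, fun ω => ((N₁ ω : ℝ)), fun ω => ((N₂ ω : ℝ)), R₁, R₂] a) inferInstance] (g a) := by
      intro a
      fin_cases a
      · exact ⟨Set.Iic (x - sh ⟨i, k, j, l⟩), measurableSet_Iic, rfl⟩
      · exact ⟨{(l : ℝ)}, measurableSet_singleton _, rfl⟩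
      · exact ⟨{(k : ℝ)}, measurableSet_singleton _, rfl⟩
      · exact ⟨{r j}, measurableSet_singleton _, rfl⟩
      · exact ⟨{r i}, measurableSet_singleton _, rfl⟩
    have hprod : μ (E ∩ B ⟨i, k, j, l⟩) = μ (g 0) * μ (g 1) * μ (g 2) * μ (g 3) * μ (g 4) := by
      rw [hEB, hindep.meas_iInter hgmeas, Fin.prod_univ_five]
    have h0 : 0 ≤ x - sh ⟨i, k, j, l⟩ := by rw [hsht]; exact sub_nonneg.2 (hx i j k hk l hl)
    have hA0 : (μ (g 0)).toReal = 1 - Real.exp (-lam * (x - sh ⟨i, k, j, l⟩)) := by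
      have h := hΔtexp (x - sh ⟨i, k, j, l⟩)
      rw [if_pos h0] at h
      exact h
    have hA1 : (μ (g 1)).toReal = pN l := by
      rw [hpN₁ l]
      have : g 1 = {ω | N₁ ω = l} := by ext ω; simp [hg]
      rw [this]
    have hA2 : (μ (g 2)).toReal = pN k := by
      rw [hpN₂ k]
      have : g 2 = {ω | N₂ ω = k} := by ext ω; simp [hg]
      rw [this]
    have hA3 : (μ (g 3)).toReal = pR j := by
      rw [hpR₁ j]
      have : g 3 = {ω | R₁ ω = r j} := rfl
      rw [this]
    have hA4 : (μ (g 4)).toReal = pR i := by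
      rw [hpR₂ i]
      have : g 4 = {ω | R₂ ω = r i} := rfl
      rw [this]
    have hexp : Real.exp (-lam * (x - sh ⟨i, k, j, l⟩)) =
        Real.exp (-lam * x) * Real.exp (lam * sh ⟨i, k, j, l⟩) := by
      rw [← Real.exp_add]
      ring_nf
    rw [hprod, ENNReal.toReal_mul, ENNReal.toReal_mul, ENNReal.toReal_mul, ENNReal.toReal_mul,
      hA0, hA1, hA2, hA3, hA4, hexp]
    ring
  -- marginal sums equal 1
  have hpNsum : ∑ k ∈ S, pN k = 1 := by
    have h := partition_sum μ S (fun ω => (N₁ ω : ℝ)) hN₁m (fun k => (k : ℝ))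
      (fun a _ b _ h => Nat.cast_injective h)
      (fun ω => ⟨N₁ ω, hN₁val ω, rfl⟩)
    rw [← h]
    refine Finset.sum_congr rfl fun k _ => ?_
    rw [hpN₁ k]
    have : {ω | N₁ ω = k} = {ω | (N₁ ω : ℝ) = (k : ℝ)} := by ext ω; simp
    rw [this]
  have hpRsum : ∑ i : Fin m, pR i = 1 := by
    simp only [hpR₁]
    exact partition_sum μ Finset.univ R₁ hR₁ r
      (fun a _ b _ h => hr.injective h) (fun ω => by simpa using hR₁val ω)
  -- assemble
  have htoReal : (μ E).toReal = ∑ t ∈ T, (μ (E ∩ B t)).toReal := by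
    rw [hsum, ENNReal.toReal_sum (fun t _ => measure_ne_top μ _)]
  rw [htoReal, Finset.sum_congr rfl key, Finset.sum_sub_distrib, ← Finset.mul_sum]
  have hw : ∑ t ∈ T, pN t.2.1 * pR t.1 * pN t.2.2.2 * pR t.2.2.1 = 1 := by
    simp only [hT, Finset.sum_product]
    calc ∑ i : Fin m, ∑ k ∈ S, ∑ j : Fin m, ∑ l ∈ S, pN k * pR i * pN l * pR j
        = ∑ i : Fin m, pR i * ∑ k ∈ S, pN k * ∑ j : Fin m, pR j * ∑ l ∈ S, pN l := by
          simp only [Finset.mul_sum]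
          exact Finset.sum_congr rfl fun _ _ => Finset.sum_congr rfl fun _ _ =>
            Finset.sum_congr rfl fun _ _ => Finset.sum_congr rfl fun _ _ => by ring
      _ = 1 := by simp [hpNsum, hpRsum]
  rw [hw]
  congr 2
  simp only [hT, Finset.sum_product, hsh]
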